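/- Let M be a finitely-valued random variable and Y_1,…,Y_ℓ random variables with values in a common finite set 𝒳, and let 𝔄⁰ be a collection of ζ-element subsets of {1,…,ℓ}. If I(M ; (Y_{s_1},…,Y_{s_ζ})) = 0 for every s = {s_1,…,s_ζ} ∈ 𝔄⁰, then for every general adaptive attack α compatible with 𝔄⁰, with observation vector Z, I(M ; Z) = 0. -/

import Mathlib

open Finset

/-- Probability that the finitely-valued random variable `X` takes value `x`,
with respect to the probability mass function `p` on the finite sample space `Ω`. -/
noncomputable def pmfProb {Ω : Type*} [Fintype Ω] {α : Type*} [Fintype α] [DecidableEq α]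
    (p : Ω → ℝ) (X : Ω → α) (x : α) : ℝ :=
  ∑ ω, if X ω = x then p ω else 0

/-- Shannon entropy (natural logarithm) of the random variable `X`. -/
noncomputable def entH {Ω : Type*} [Fintype Ω] {α : Type*} [Fintype α] [DecidableEq α]
    (p : Ω → ℝ) (X : Ω → α) : ℝ :=
  ∑ x, Real.negMulLog (pmfProb p X x)

/-- Conditional Shannon entropy `H(X|Y) = H(X,Y) - H(Y)`. -/
noncomputable def condH {Ω : Type*} [Fintype Ω] {α β : Type*} [Fintype α] [DecidableEq α]
    [Fintype β] [DecidableEq β] (p : Ω → ℝ) (X : Ω → α) (Y : Ω → β) : ℝ :=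
  entH p (fun ω => (X ω, Y ω)) - entH p Y

/-- Mutual information `I(X;Y) = H(X) + H(Y) - H(X,Y)`. -/
noncomputable def mutInfo {Ω : Type*} [Fintype Ω] {α β : Type*} [Fintype α] [DecidableEq α]
    [Fintype β] [DecidableEq β] (p : Ω → ℝ) (X : Ω → α) (Y : Ω → β) : ℝ :=
  entH p X + entH p Y - entH p (fun ω => (X ω, Y ω))

/-- The conditional probability mass function given an event `E`. -/
noncomputable def condPMF {Ω : Type*} [Fintype Ω] (p : Ω → ℝ) (E : Ω → Prop)
    [DecidablePred E] : Ω → ℝ :=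
  fun ω => if E ω then p ω / (∑ ω' ∈ Finset.univ.filter E, p ω') else 0



open Finset

section helpers
variable {Ω : Type*} [Fintype Ω] {α β : Type*} [Fintype α] [DecidableEq α]
  [Fintype β] [DecidableEq β] (p : Ω → ℝ) (X : Ω → α) (Y : Ω → β)

lemma pmfProb_nonneg (hp : ∀ ω, 0 ≤ p ω) (x : α) : 0 ≤ pmfProb p X x := by
  apply Finset.sum_nonneg; intro ω _; split <;> simp [hp ω]

lemma pmfProb_sum (hp1 : ∑ ω, p ω = 1) : ∑ x, pmfProb p X x = 1 := by
  unfold pmfProb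
  rw [Finset.sum_comm]
  simp [Finset.sum_ite_eq, hp1]

lemma pair_marginal_fst (x : α) :
    ∑ y, pmfProb p (fun ω => (X ω, Y ω)) (x, y) = pmfProb p X x := by
  unfold pmfProb
  rw [Finset.sum_comm]
  refine Finset.sum_congr rfl fun ω _ => ?_
  simp [Prod.ext_iff, ite_and, Finset.sum_ite_eq]

lemma pair_marginal_snd (y : β) :
    ∑ x, pmfProb p (fun ω => (X ω, Y ω)) (x, y) = pmfProb p Y y := by
  unfold pmfProb
  rw [Finset.sum_comm]
  refine Finset.sum_congr rfl fun ω _ => ?_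
  simp [Prod.ext_iff, ite_and, Finset.sum_ite_eq]

end helpers

section gibbs
variable {Ω : Type*} [Fintype Ω] {α β : Type*} [Fintype α] [DecidableEq α]
  [Fintype β] [DecidableEq β] (p : Ω → ℝ) (X : Ω → α) (Y : Ω → β)

lemma pair_sum (hp1 : ∑ ω, p ω = 1) :
    ∑ xy : α × β, pmfProb p (fun ω => (X ω, Y ω)) xy = 1 :=
  pmfProb_sum p _ hp1

lemma joint_le_fst (hp : ∀ ω, 0 ≤ p ω) (x : α) (y : β) :
    pmfProb p (fun ω => (X ω, Y ω)) (x, y) ≤ pmfProb p X x := by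
  rw [← pair_marginal_fst p X Y x]
  exact Finset.single_le_sum
    (fun y' _ => pmfProb_nonneg p (fun ω => (X ω, Y ω)) hp (x, y')) (Finset.mem_univ y)

lemma joint_le_snd (hp : ∀ ω, 0 ≤ p ω) (x : α) (y : β) :
    pmfProb p (fun ω => (X ω, Y ω)) (x, y) ≤ pmfProb p Y y := by
  rw [← pair_marginal_snd p X Y y]
  exact Finset.single_le_sum
    (fun x' _ => pmfProb_nonneg p (fun ω => (X ω, Y ω)) hp (x', y)) (Finset.mem_univ x)

/-- independence implies zero mutual information -/
lemma mutInfo_eq_zero_of_indep (hp : ∀ ω, 0 ≤ p ω) (hp1 : ∑ ω, p ω = 1)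
    (h : ∀ x y, pmfProb p (fun ω => (X ω, Y ω)) (x, y) = pmfProb p X x * pmfProb p Y y) :
    mutInfo p X Y = 0 := by
  have hpair : entH p (fun ω => (X ω, Y ω)) = entH p X + entH p Y := by
    unfold entH
    rw [Fintype.sum_prod_type]
    have hrow : ∀ x, ∑ y, Real.negMulLog (pmfProb p (fun ω => (X ω, Y ω)) (x, y))
        = Real.negMulLog (pmfProb p X x)
          + pmfProb p X x * ∑ y, Real.negMulLog (pmfProb p Y y) := by
      intro x
      have e : ∀ y, Real.negMulLog (pmfProb p (fun ω => (X ω, Y ω)) (x, y))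
          = pmfProb p Y y * Real.negMulLog (pmfProb p X x)
            + pmfProb p X x * Real.negMulLog (pmfProb p Y y) := fun y => by
        rw [h x y, Real.negMulLog_mul]
      rw [Finset.sum_congr rfl fun y _ => e y, Finset.sum_add_distrib,
        ← Finset.sum_mul, pmfProb_sum p Y hp1, one_mul, ← Finset.mul_sum]
    rw [Finset.sum_congr rfl fun x _ => hrow x, Finset.sum_add_distrib,
      ← Finset.sum_mul, pmfProb_sum p X hp1, one_mul]
  unfold mutInfo
  rw [hpair]; ring

/-- zero mutual information implies independence (Gibbs) -/
lemma indep_of_mutInfo_eq_zero (hp : ∀ ω, 0 ≤ p ω) (hp1 : ∑ ω, p ω = 1)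
    (h : mutInfo p X Y = 0) :
    ∀ x y, pmfProb p (fun ω => (X ω, Y ω)) (x, y) = pmfProb p X x * pmfProb p Y y := by
  classical
  set a : α × β → ℝ := pmfProb p (fun ω => (X ω, Y ω)) with ha
  set q : α → ℝ := pmfProb p X with hq
  set r : β → ℝ := pmfProb p Y with hr
  set w : α × β → ℝ := fun xy => q xy.1 * r xy.2 with hw
  have hwnn : ∀ xy : α × β, 0 ≤ w xy := fun xy =>
    mul_nonneg (pmfProb_nonneg p X hp _) (pmfProb_nonneg p Y hp _)
  have hann : ∀ xy : α × β, 0 ≤ a xy := fun xy =>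
    pmfProb_nonneg p (fun ω => (X ω, Y ω)) hp xy
  have haw : ∀ xy : α × β, w xy = 0 → a xy = 0 := by
    intro ⟨x, y⟩ h0
    rcases mul_eq_zero.1 h0 with h0 | h0
    · exact le_antisymm (h0 ▸ joint_le_fst p X Y hp x y) (hann _)
    · exact le_antisymm (h0 ▸ joint_le_snd p X Y hp x y) (hann _)
  set pt : α × β → ℝ := fun xy => if w xy = 0 then 0 else a xy / w xy with hpt
  have hwpt : ∀ xy, w xy * pt xy = a xy := by
    intro xy; by_cases h0 : w xy = 0
    · simp [hpt, h0, haw xy h0]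
    · rw [hpt]; simp only [h0, if_false]
      rw [mul_comm]; exact div_mul_cancel₀ _ h0
  have hwsum : ∑ xy : α × β, w xy = 1 := by
    rw [hw, Fintype.sum_prod_type]
    simp_rw [← Finset.mul_sum]
    rw [hr, pmfProb_sum p Y hp1]
    simp only [mul_one]
    rw [hq, pmfProb_sum p X hp1]
  have hsum1 : ∑ xy : α × β, w xy • pt xy = 1 := by
    simp_rw [smul_eq_mul, hwpt]; exact pair_sum p X Y hp1
  have hterm : ∀ xy : α × β, w xy • Real.negMulLog (pt xy)
      = Real.negMulLog (a xy) + a xy * Real.log (q xy.1) + a xy * Real.log (r xy.2) := by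
    intro ⟨x, y⟩
    by_cases h0 : w (x, y) = 0
    · simp [hpt, h0, haw _ h0]
    · have hq0 : q x ≠ 0 := fun hh => h0 (by simp [hw, hh])
      have hr0 : r y ≠ 0 := fun hh => h0 (by simp [hw, hh])
      by_cases ha0 : a (x, y) = 0
      · simp only [hpt, h0, if_false, ha0, zero_div, Real.negMulLog_zero, smul_eq_mul,
          mul_zero, zero_mul, add_zero, zero_add]
      · have hlw : Real.log (w (x, y)) = Real.log (q x) + Real.log (r y) :=
          Real.log_mul hq0 hr0
        have key : ∀ t : ℝ, w (x, y) * (-(a (x, y) / w (x, y)) * t) = -(a (x, y)) * t := by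
          intro t; field_simp
        have hptv : pt (x, y) = a (x, y) / w (x, y) := by simp [hpt, h0]
        rw [smul_eq_mul, hptv]
        simp only [Real.negMulLog, neg_mul]
        rw [show w (x, y) * -(a (x, y) / w (x, y) * Real.log (a (x, y) / w (x, y)))
            = -(a (x, y)) * Real.log (a (x, y) / w (x, y)) by
          field_simp]
        rw [Real.log_div ha0 h0, hlw]
        ring
  have hsum2 : ∑ xy : α × β, w xy • Real.negMulLog (pt xy) = - mutInfo p X Y := by
    rw [Finset.sum_congr rfl fun xy _ => hterm xy]
    rw [Finset.sum_add_distrib, Finset.sum_add_distrib]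
    have e1 : ∑ xy : α × β, a xy * Real.log (q xy.1) = ∑ x, q x * Real.log (q x) := by
      rw [Fintype.sum_prod_type]
      refine Finset.sum_congr rfl fun x _ => ?_
      show (∑ y, a (x, y) * Real.log (q x)) = q x * Real.log (q x)
      rw [← Finset.sum_mul, ha, pair_marginal_fst p X Y x, ← hq]
    have e2 : ∑ xy : α × β, a xy * Real.log (r xy.2) = ∑ y, r y * Real.log (r y) := by
      rw [Fintype.sum_prod_type, Finset.sum_comm]
      refine Finset.sum_congr rfl fun y _ => ?_
      show (∑ x, a (x, y) * Real.log (r y)) = r y * Real.log (r y)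
      rw [← Finset.sum_mul, ha, pair_marginal_snd p X Y y, ← hr]
    rw [e1, e2, ha, hq, hr]
    unfold mutInfo entH
    simp only [Real.negMulLog_eq_neg, Finset.sum_neg_distrib]
    ring
  have hjensen := (Real.strictConcaveOn_negMulLog).map_sum_eq_iff'
    (t := Finset.univ) (w := w) (p := pt)
    (fun xy _ => hwnn xy) (by simpa using hwsum)
    (fun xy _ => by
      by_cases h0 : w xy = 0
      · simp [hpt, h0]
      · simp only [hpt, h0, if_false, Set.mem_Ici]
        exact div_nonneg (hann xy) (hwnn xy))
  rw [show ∑ xy ∈ Finset.univ, w xy • pt xy = 1 by simpa using hsum1] at hjensen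
  have heq : Real.negMulLog 1 = ∑ xy ∈ Finset.univ, w xy • Real.negMulLog (pt xy) := by
    rw [Real.negMulLog_one]
    rw [show ∑ xy ∈ Finset.univ, w xy • Real.negMulLog (pt xy) = - mutInfo p X Y by
      simpa using hsum2, h, neg_zero]
  have hconc := hjensen.1 heq
  intro x y
  by_cases h0 : w (x, y) = 0
  · rw [haw _ h0]
    have h0' : q x * r y = 0 := by simpa [hw] using h0
    exact h0'.symm
  · have hone := hconc (x, y) (Finset.mem_univ _) h0
    simp only [hpt, h0, if_false] at hone
    rw [div_eq_one_iff_eq h0] at hone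
    rw [hone]
end gibbs

section decomp
open Classical in
lemma event_decomp {Ω γ : Type*} [Fintype Ω] [Fintype γ] [DecidableEq γ]
    (p : Ω → ℝ) (V : Ω → γ) (R : γ → Prop) :
    ∑ ω, (if R (V ω) then p ω else 0) = ∑ g, if R g then pmfProb p V g else 0 := by
  have step : ∀ g, (if R g then pmfProb p V g else 0)
      = ∑ ω, if R g ∧ V ω = g then p ω else 0 := by
    intro g; by_cases hg : R g <;> simp [pmfProb, hg]
  rw [Finset.sum_congr rfl fun g _ => step g, Finset.sum_comm]
  refine Finset.sum_congr rfl fun ω _ => ?_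
  have step2 : ∀ g, (if R g ∧ V ω = g then p ω else 0)
      = if V ω = g then (if R g then p ω else 0) else 0 := by
    intro g; by_cases h1 : R g <;> by_cases h2 : V ω = g <;> simp [h1, h2]
  rw [Finset.sum_congr rfl fun g _ => step2 g]
  simp [Finset.sum_ite_eq]
end decomp


/-- paper's Corollary 1 / `T7C`: if `I(M ; Y_s) = 0` for every
`s ∈ 𝔄`, then for every general adaptive attack `α` compatible with `𝔄`, with
observation vector `Z`, `I(M ; Z) = 0`. -/
theorem adaptive_attack_perfect_secrecy {Ω μ 𝒳 : Type*} [Fintype Ω] [Fintype μ]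
    [DecidableEq μ] [Fintype 𝒳] [DecidableEq 𝒳]
    (p : Ω → ℝ) (hp : ∀ ω, 0 ≤ p ω) (hp1 : ∑ ω, p ω = 1)
    (ℓ ζ : ℕ) (M : Ω → μ) (Y : Fin ℓ → Ω → 𝒳)
    (𝔄 : Finset (Finset (Fin ℓ))) (h𝔄 : ∀ s ∈ 𝔄, s.card = ζ)
    (hsec : ∀ s ∈ 𝔄, mutInfo p M (fun ω (e : ↥s) => Y e.1 ω) = 0)
    (α : (j : Fin ζ) → (Fin (j : ℕ) → 𝒳) → Fin ℓ)
    (hcompat : ∀ z : Fin ζ → 𝒳,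
      (Finset.image
        (fun j : Fin ζ => α j (fun i => z ⟨i.1, i.2.trans j.2⟩)) Finset.univ) ∈ 𝔄)
    (Z : Ω → Fin ζ → 𝒳)
    (hZ : ∀ ω (j : Fin ζ),
      Z ω j = Y (α j (fun i => Z ω ⟨i.1, i.2.trans j.2⟩)) ω) :
    mutInfo p M Z = 0 := by
  classical
  apply mutInfo_eq_zero_of_indep p M Z hp hp1
  intro m z
  set s : Finset (Fin ℓ) :=
    Finset.image (fun j : Fin ζ => α j (fun i => z ⟨i.1, i.2.trans j.2⟩)) Finset.univ
    with hs
  have hsA : s ∈ 𝔄 := hcompat z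
  have hβmem : ∀ j : Fin ζ, α j (fun i => z ⟨i.1, i.2.trans j.2⟩) ∈ s := fun j =>
    Finset.mem_image_of_mem _ (Finset.mem_univ j)
  set W : Ω → (↥s → 𝒳) := fun ω (e : ↥s) => Y e.1 ω with hW
  have hindep := indep_of_mutInfo_eq_zero p M W hp hp1 (hsec s hsA)
  -- characterization of the event Z = z
  have hchar : ∀ ω, Z ω = z ↔
      ∀ j : Fin ζ, Y (α j (fun i => z ⟨i.1, i.2.trans j.2⟩)) ω = z j := by
    intro ω
    constructor
    · intro hzz j
      have h1 := hZ ω j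
      rw [hzz] at h1
      exact h1.symm
    · intro h
      funext j
      obtain ⟨n, hn⟩ := j
      induction n using Nat.strong_induction_on with
      | _ n ih =>
        have h2 : (fun i : Fin n => Z ω ⟨i.1, i.2.trans hn⟩)
            = (fun i : Fin n => z ⟨i.1, i.2.trans hn⟩) :=
          funext fun i => ih i.1 i.2 (i.2.trans hn)
        exact (hZ ω ⟨n, hn⟩).trans
          ((congrArg (fun g => Y (α ⟨n, hn⟩ g) ω) h2).trans (h ⟨n, hn⟩))
  -- the event in terms of W
  set R : (↥s → 𝒳) → Prop :=
    fun f => ∀ j : Fin ζ, f ⟨α j (fun i => z ⟨i.1, i.2.trans j.2⟩), hβmem j⟩ = z j with hR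
  have hcharW : ∀ ω, (Z ω = z) ↔ R (W ω) := fun ω => hchar ω
  have hZz : pmfProb p Z z = ∑ f : ↥s → 𝒳, if R f then pmfProb p W f else 0 := by
    rw [show pmfProb p Z z = ∑ ω, (if R (W ω) then p ω else 0) from
      Finset.sum_congr rfl fun ω _ => if_congr (hcharW ω) rfl rfl]
    convert event_decomp p W R using 3
  have hjoint : pmfProb p (fun ω => (M ω, Z ω)) (m, z)
      = ∑ f : ↥s → 𝒳, if R f then pmfProb p (fun ω => (M ω, W ω)) (m, f) else 0 := by
    have e1 : pmfProb p (fun ω => (M ω, Z ω)) (m, z)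
        = ∑ ω, (if (fun mf : μ × (↥s → 𝒳) => mf.1 = m ∧ R mf.2) (M ω, W ω)
            then p ω else 0) := by
      refine Finset.sum_congr rfl fun ω _ => if_congr ?_ rfl rfl
      rw [Prod.ext_iff]
      exact and_congr Iff.rfl (hcharW ω)
    rw [e1]
    have e1' := event_decomp p (fun ω => (M ω, W ω)) (fun mf => mf.1 = m ∧ R mf.2)
    rw [show (∑ ω, if (fun mf : μ × (↥s → 𝒳) => mf.1 = m ∧ R mf.2) (M ω, W ω) then p ω else 0)
        = ∑ g : μ × (↥s → 𝒳), if g.1 = m ∧ R g.2 then pmfProb p (fun ω => (M ω, W ω)) g else 0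
      from by convert e1' using 3]
    rw [Fintype.sum_prod_type, Finset.sum_comm]
    refine Finset.sum_congr rfl fun f _ => ?_
    have e2 : ∀ m', (if (m', f).1 = m ∧ R (m', f).2
        then pmfProb p (fun ω => (M ω, W ω)) (m', f) else 0)
        = if m' = m then (if R f then pmfProb p (fun ω => (M ω, W ω)) (m', f) else 0)
          else 0 := by
      intro m'; by_cases h1 : m' = m <;> by_cases h2 : R f <;> simp [h1, h2]
    rw [Finset.sum_congr rfl fun m' _ => e2 m']
    simp [Finset.sum_ite_eq']
  rw [hjoint, hZz]
  rw [Finset.mul_sum]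
  refine Finset.sum_congr rfl fun f _ => ?_
  rw [hindep m f]
  by_cases hf : R f <;> simp [hf]
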